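/- Let Ω ⊂ ℝⁿ be a compact convex domain and p₁,…,p_k ∈ ℝⁿ distinct. Then the set H = { h ∈ ℝᵏ : vol(W_i(h) ∩ Ω) > 0 for all i } is a nonempty open convex subset of ℝᵏ. -/

import Mathlib

open MeasureTheory
open scoped RealInnerProductSpace Topology

private lemma vol_hyperplane_zero' (n : ℕ) (v : EuclideanSpace ℝ (Fin n)) (hv : v ≠ 0) (c : ℝ) :
    volume {x : EuclideanSpace ℝ (Fin n) | ⟪x, v⟫ = c} = 0 := by
  have hvv : ⟪v, v⟫ ≠ 0 := fun h => hv (inner_self_eq_zero.mp h)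
  set x₀ : EuclideanSpace ℝ (Fin n) := (c / ⟪v, v⟫) • v with hx₀
  set S : AffineSubspace ℝ (EuclideanSpace ℝ (Fin n)) :=
    AffineSubspace.mk' x₀ (LinearMap.ker (innerSL ℝ v : EuclideanSpace ℝ (Fin n) →ₗ[ℝ] ℝ)) with hS
  have hSne : S ≠ ⊤ := by
    intro h
    have : (LinearMap.ker (innerSL ℝ v : EuclideanSpace ℝ (Fin n) →ₗ[ℝ] ℝ) : Submodule ℝ _) = ⊤ := by
      have := congrArg AffineSubspace.direction h
      simpa [hS, AffineSubspace.direction_mk'] using this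
    have hvmem : v ∈ LinearMap.ker (innerSL ℝ v : EuclideanSpace ℝ (Fin n) →ₗ[ℝ] ℝ) := by rw [this]; trivial
    exact hvv (by simpa using hvmem)
  have heq : {x : EuclideanSpace ℝ (Fin n) | ⟪x, v⟫ = c} = (S : Set _) := by
    ext x
    simp only [Set.mem_setOf_eq, hS, SetLike.mem_coe, AffineSubspace.mem_mk',
      LinearMap.mem_ker, ContinuousLinearMap.coe_coe, vsub_eq_sub]
    rw [innerSL_apply_apply, inner_sub_right, hx₀, real_inner_smul_right, real_inner_comm v x,
      div_mul_cancel₀ c hvv, sub_eq_zero]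
  rw [heq]
  exact Measure.addHaar_affineSubspace _ S hSne

private lemma cell_vol_pos_iff' (n k : ℕ) (Ω : Set (EuclideanSpace ℝ (Fin n)))
    (hΩconv : Convex ℝ Ω) (p : Fin k → EuclideanSpace ℝ (Fin n)) (hp : Function.Injective p)
    (h : Fin k → ℝ) (i : Fin k) :
    0 < volume ({x : EuclideanSpace ℝ (Fin n) | ∀ j, ⟪x, p j⟫ + h j ≤ ⟪x, p i⟫ + h i} ∩ Ω) ↔
    ∃ x ∈ interior Ω, ∀ j, j ≠ i → ⟪x, p j⟫ + h j < ⟪x, p i⟫ + h i := by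
  set W : Set (EuclideanSpace ℝ (Fin n)) :=
    {x | ∀ j, ⟪x, p j⟫ + h j ≤ ⟪x, p i⟫ + h i} with hW
  constructor
  · intro hpos
    have hfr : volume (frontier Ω) = 0 := hΩconv.addHaar_frontier volume
    have hA : 0 < volume (W ∩ interior Ω) := by
      by_contra hc
      push_neg at hc
      have h0 : volume (W ∩ interior Ω) = 0 := le_antisymm hc zero_le
      have hsub : W ∩ Ω ⊆ (W ∩ interior Ω) ∪ frontier Ω := by
        rintro x ⟨hxW, hxΩ⟩
        by_cases hxi : x ∈ interior Ω
        · exact Or.inl ⟨hxW, hxi⟩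
        · exact Or.inr ⟨subset_closure hxΩ, hxi⟩
      have : volume (W ∩ Ω) ≤ volume (W ∩ interior Ω) + volume (frontier Ω) :=
        le_trans (measure_mono hsub) (measure_union_le _ _)
      rw [h0, hfr] at this
      simp at this
      exact hpos.ne' this
    set N : Set (EuclideanSpace ℝ (Fin n)) :=
      ⋃ j, {x | j ≠ i ∧ ⟪x, p j - p i⟫ = h i - h j} with hN
    have hNz : volume N = 0 := by
      refine measure_iUnion_null fun j => ?_
      by_cases hj : j = i
      · simp [hj]
      · refine measure_mono_null (fun x hx => hx.2) ?_
        exact vol_hyperplane_zero' n (p j - p i) (sub_ne_zero.mpr (hp.ne hj)) (h i - h j)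
    have hpos2 : 0 < volume ((W ∩ interior Ω) \ N) := by
      rw [measure_diff_null hNz]; exact hA
    obtain ⟨x, hx⟩ := nonempty_of_measure_ne_zero hpos2.ne'
    refine ⟨x, hx.1.2, fun j hj => ?_⟩
    have hle : ⟪x, p j⟫ + h j ≤ ⟪x, p i⟫ + h i := hx.1.1 j
    have hxN : x ∉ N := hx.2
    rw [hN] at hxN
    simp only [Set.mem_iUnion, Set.mem_setOf_eq, not_exists, not_and] at hxN
    have hne : ⟪x, p j - p i⟫ ≠ h i - h j := hxN j hj
    rw [inner_sub_right] at hne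
    refine lt_of_le_of_ne hle fun heq => hne ?_
    linarith
  · rintro ⟨x, hxi, hx⟩
    set U : Set (EuclideanSpace ℝ (Fin n)) :=
      interior Ω ∩ ⋂ j, {y | j ≠ i → ⟪y, p j⟫ + h j < ⟪y, p i⟫ + h i} with hU
    have hUopen : IsOpen U := by
      refine isOpen_interior.inter (isOpen_iInter_of_finite fun j => ?_)
      by_cases hj : j = i
      · simp [hj]
      · have : {y : EuclideanSpace ℝ (Fin n) | j ≠ i → ⟪y, p j⟫ + h j < ⟪y, p i⟫ + h i}
            = {y | ⟪y, p j⟫ + h j < ⟪y, p i⟫ + h i} := by ext y; simp [hj]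
        rw [this]
        exact isOpen_lt ((continuous_id.inner continuous_const).add continuous_const)
          ((continuous_id.inner continuous_const).add continuous_const)
    have hxU : x ∈ U := ⟨hxi, Set.mem_iInter.mpr fun j hj => hx j hj⟩
    have hsub : U ⊆ W ∩ Ω := by
      rintro y ⟨hy1, hy2⟩
      refine ⟨fun j => ?_, interior_subset hy1⟩
      by_cases hj : j = i
      · subst hj; exact le_refl _
      · exact (Set.mem_iInter.mp hy2 j hj).le
    exact lt_of_lt_of_le (hUopen.measure_pos volume ⟨x, hxU⟩) (measure_mono hsub)

/-- The set `H` of height vectors for which every cell `W_i(h) ∩ Ω` has positive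
volume is a nonempty open convex subset of `ℝᵏ`. -/
theorem admissible_heights_open_convex_nonempty (n k : ℕ)
    (Ω : Set (EuclideanSpace ℝ (Fin n))) (hΩc : IsCompact Ω) (hΩconv : Convex ℝ Ω)
    (hΩint : (interior Ω).Nonempty)
    (p : Fin k → EuclideanSpace ℝ (Fin n)) (hp : Function.Injective p)
    (H : Set (Fin k → ℝ))
    (hH : H = {h | ∀ i, 0 < volume
      ({x : EuclideanSpace ℝ (Fin n) | ∀ j, ⟪x, p j⟫ + h j ≤ ⟪x, p i⟫ + h i} ∩ Ω)}) :
    H.Nonempty ∧ IsOpen H ∧ Convex ℝ H := by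
  have hH' : H = {h : Fin k → ℝ | ∀ i, ∃ x ∈ interior Ω, ∀ j, j ≠ i →
      ⟪x, p j⟫ + h j < ⟪x, p i⟫ + h i} := by
    rw [hH]
    ext h
    simp only [Set.mem_setOf_eq]
    exact forall_congr' fun i => cell_vol_pos_iff' n k Ω hΩconv p hp h i
  refine ⟨?_, ?_, ?_⟩
  · -- Nonempty
    obtain ⟨x₀, hx₀⟩ := hΩint
    have hev : ∀ᶠ ε : ℝ in 𝓝[>] (0:ℝ), ∀ i, x₀ + ε • p i ∈ interior Ω := by
      refine Filter.eventually_all.mpr fun i => ?_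
      have hcont : Filter.Tendsto (fun ε : ℝ => x₀ + ε • p i) (𝓝[>] (0:ℝ)) (𝓝 x₀) := by
        have hc : Continuous fun ε : ℝ => x₀ + ε • p i := by continuity
        have := hc.tendsto 0
        simp only [zero_smul, add_zero] at this
        exact this.mono_left nhdsWithin_le_nhds
      exact hcont.eventually (isOpen_interior.eventually_mem hx₀)
    obtain ⟨ε, h1, h2⟩ := (hev.and eventually_mem_nhdsWithin).exists
    have hε : (0:ℝ) < ε := h2
    refine ⟨fun j => -⟪x₀, p j⟫ - ε * ‖p j‖^2 / 2, ?_⟩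
    rw [hH']
    refine fun i => ⟨x₀ + ε • p i, h1 i, fun j hj => ?_⟩
    have hkey : 2 * ⟪p i, p j⟫ < ‖p i‖^2 + ‖p j‖^2 := by
      have hne : p i - p j ≠ 0 := sub_ne_zero.mpr (hp.ne (Ne.symm hj))
      have h0 : (0:ℝ) < ‖p i - p j‖^2 := pow_pos (norm_pos_iff.mpr hne) 2
      rw [norm_sub_sq_real] at h0
      linarith
    have hii : ⟪p i, p i⟫ = ‖p i‖^2 := real_inner_self_eq_norm_sq _
    rw [inner_add_left, inner_add_left, real_inner_smul_left, real_inner_smul_left, hii]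
    nlinarith [mul_lt_mul_of_pos_left hkey hε]
  · -- Open
    rw [hH']
    have heq : {h : Fin k → ℝ | ∀ i, ∃ x ∈ interior Ω, ∀ j, j ≠ i →
        ⟪x, p j⟫ + h j < ⟪x, p i⟫ + h i}
        = ⋂ i, ⋃ x ∈ interior Ω, {h : Fin k → ℝ | ∀ j, j ≠ i →
          ⟪x, p j⟫ + h j < ⟪x, p i⟫ + h i} := by
      ext h
      simp [Set.mem_iInter, Set.mem_iUnion]
    rw [heq]
    refine isOpen_iInter_of_finite fun i => isOpen_iUnion fun x => isOpen_iUnion fun _ => ?_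
    rw [Set.setOf_forall]
    refine isOpen_iInter_of_finite fun j => ?_
    by_cases hj : j = i
    · simp [hj]
    · have : {h : Fin k → ℝ | j ≠ i → ⟪x, p j⟫ + h j < ⟪x, p i⟫ + h i}
          = {h : Fin k → ℝ | ⟪x, p j⟫ + h j < ⟪x, p i⟫ + h i} := by ext y; simp [hj]
      rw [this]
      exact isOpen_lt (continuous_const.add (continuous_apply j))
        (continuous_const.add (continuous_apply i))
  · -- Convex
    rw [hH']
    intro h₁ hh₁ h₂ hh₂ a b ha hb hab
    intro i
    obtain ⟨x₁, hx₁i, hx₁⟩ := hh₁ i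
    obtain ⟨x₂, hx₂i, hx₂⟩ := hh₂ i
    refine ⟨a • x₁ + b • x₂, hΩconv.interior hx₁i hx₂i ha hb hab, fun j hj => ?_⟩
    have e₁ := hx₁ j hj
    have e₂ := hx₂ j hj
    simp only [Pi.add_apply, Pi.smul_apply, smul_eq_mul]
    rw [inner_add_left, inner_add_left, real_inner_smul_left, real_inner_smul_left,
      real_inner_smul_left, real_inner_smul_left]
    rcases ha.lt_or_eq with ha' | ha'
    · nlinarith [mul_lt_mul_of_pos_left e₁ ha', mul_le_mul_of_nonneg_left e₂.le hb]
    · have hb' : 0 < b := by rw [← ha'] at hab; linarith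
      nlinarith [mul_lt_mul_of_pos_left e₂ hb']
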